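/- The function f(x) = (x+2)^{2/m} · (x+1)^{x+1} · (1−x)^{x−1} / ((x+2) · x^{2x}), for any fixed real m ≥ 3, is strictly increasing on the interval (0, 0.5). -/

import Mathlib

theorem stmt_7 (m : ℝ) (hm : 3 ≤ m) :
    StrictMonoOn
      (fun x : ℝ =>
        (x+2) ^ (2/m) * (x+1) ^ (x+1) * (1-x) ^ (x-1) / ((x+2) * x ^ (2*x)))
      (Set.Ioo (0 : ℝ) 0.5) := by
  have hm0 : (0:ℝ) < m := by linarith
  set g : ℝ → ℝ := fun y =>
    Real.log (y+2) * (2/m) + Real.log (y+1) * (y+1) + Real.log (1-y) * (y-1)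
      - (Real.log (y+2) + Real.log y * (2*y)) with hg_def
  -- derivative of g
  have hder : ∀ x ∈ Set.Ioo (0:ℝ) 0.5,
      HasDerivAt g ((2/m - 1)/(x+2) + Real.log (x+1) + Real.log (1-x) - 2*Real.log x) x := by
    intro x hx
    obtain ⟨hx0, hx5⟩ := hx
    have hx5' : x < 1/2 := by norm_num at hx5; linarith
    have h2 : (0:ℝ) < x + 2 := by linarith
    have h1 : (0:ℝ) < x + 1 := by linarith
    have h1x : (0:ℝ) < 1 - x := by linarith
    have d2 : HasDerivAt (fun y : ℝ => Real.log (y+2)) (1/(x+2)) x :=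
      ((hasDerivAt_id x).add_const 2).log (ne_of_gt h2)
    have d1 : HasDerivAt (fun y : ℝ => Real.log (y+1)) (1/(x+1)) x :=
      ((hasDerivAt_id x).add_const 1).log (ne_of_gt h1)
    have d3 : HasDerivAt (fun y : ℝ => Real.log (1-y)) (-1/(1-x)) x :=
      ((hasDerivAt_id x).const_sub 1).log (ne_of_gt h1x)
    have t1 : HasDerivAt (fun y : ℝ => Real.log (y+2) * (2/m)) ((1/(x+2))*(2/m)) x :=
      d2.mul_const _
    have t2 : HasDerivAt (fun y : ℝ => Real.log (y+1) * (y+1))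
        ((1/(x+1))*(x+1) + Real.log (x+1) * 1) x :=
      d1.mul ((hasDerivAt_id x).add_const 1)
    have t3 : HasDerivAt (fun y : ℝ => Real.log (1-y) * (y-1))
        ((-1/(1-x))*(x-1) + Real.log (1-x) * 1) x :=
      d3.mul ((hasDerivAt_id x).sub_const 1)
    have t4 : HasDerivAt (fun y : ℝ => Real.log y * (2*y))
        (x⁻¹*(2*x) + Real.log x * 2) x :=
      (Real.hasDerivAt_log (ne_of_gt hx0)).mul (by simpa using (hasDerivAt_id x).const_mul 2)
    have := ((t1.add t2).add t3).sub (d2.add t4)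
    convert this using 1
    · rfl
    · rfl
    · rfl
    field_simp
    ring
  -- g is strictly monotone
  have hmono : StrictMonoOn g (Set.Ioo (0:ℝ) 0.5) := by
    apply strictMonoOn_of_deriv_pos (convex_Ioo _ _)
    · intro x hx
      exact ((hder x hx).differentiableAt.continuousAt).continuousWithinAt
    · rw [interior_Ioo]
      intro x hx
      rw [(hder x hx).deriv]
      obtain ⟨hx0, hx5⟩ := hx
      have hx5' : x < 1/2 := by norm_num at hx5; linarith
      have h2 : (0:ℝ) < x + 2 := by linarith
      have h1 : (0:ℝ) < x + 1 := by linarith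
      have h1x : (0:ℝ) < 1 - x := by linarith
      -- log bound: log 3 + 2 log x ≤ log (x+1) + log (1-x)
      have key : Real.log 3 + Real.log x + Real.log x ≤ Real.log (x+1) + Real.log (1-x) := by
        have e1 : Real.log (3*x*x) = Real.log 3 + Real.log x + Real.log x := by
          rw [Real.log_mul (by positivity) (ne_of_gt hx0),
            Real.log_mul (by norm_num) (ne_of_gt hx0)]
        have e2 : Real.log ((x+1)*(1-x)) = Real.log (x+1) + Real.log (1-x) :=
          Real.log_mul (ne_of_gt h1) (ne_of_gt h1x)
        rw [← e1, ← e2]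
        apply Real.log_le_log (by positivity)
        nlinarith
      -- log 3 > 1
      have hlog3 : (1:ℝ) < Real.log 3 := by
        rw [Real.lt_log_iff_exp_lt (by norm_num)]
        calc Real.exp 1 < 2.7182818286 := Real.exp_one_lt_d9
          _ < 3 := by norm_num
      -- bound on the first term
      have hfrac : -(1/2 : ℝ) ≤ (2/m - 1)/(x+2) := by
        rw [le_div_iff₀ h2]
        have h2m : (0:ℝ) < 2/m := by positivity
        nlinarith
      linarith
  -- f = exp ∘ g on the interval
  have feq : ∀ x ∈ Set.Ioo (0:ℝ) 0.5,
      (x+2) ^ (2/m) * (x+1) ^ (x+1) * (1-x) ^ (x-1) / ((x+2) * x ^ (2*x))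
        = Real.exp (g x) := by
    intro x hx
    obtain ⟨hx0, hx5⟩ := hx
    have hx5' : x < 1/2 := by norm_num at hx5; linarith
    have h2 : (0:ℝ) < x + 2 := by linarith
    have h1 : (0:ℝ) < x + 1 := by linarith
    have h1x : (0:ℝ) < 1 - x := by linarith
    rw [hg_def]
    simp only
    rw [show Real.log (x+2) * (2/m) + Real.log (x+1) * (x+1) + Real.log (1-x) * (x-1)
        - (Real.log (x+2) + Real.log x * (2*x))
        = (Real.log (x+2) * (2/m) + Real.log (x+1) * (x+1) + Real.log (1-x) * (x-1))
          - (Real.log (x+2) + Real.log x * (2*x)) from rfl]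
    rw [Real.exp_sub, Real.exp_add, Real.exp_add, Real.exp_add, Real.exp_log h2]
    rw [Real.rpow_def_of_pos h2, Real.rpow_def_of_pos h1, Real.rpow_def_of_pos h1x,
      Real.rpow_def_of_pos hx0]
  -- conclude
  intro a ha b hb hab
  simp only
  rw [feq a ha, feq b hb]
  exact Real.exp_lt_exp.mpr (hmono ha hb hab)
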